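/- Let (Ω, F, P) be a probability space with a filtration (F_i)_{i ≥ 0}, b ∈ (1, 2], c > 0, C ≥ 0, and let (D_i)_{i ≥ 1} be random variables such that each D_i is F_i-measurable and integrable with E[|D_i|^b] < ∞, E[D_i | F_{i−1}] = 0 almost surely, and E[|D_i|^b | F_{i−1}] ≤ C almost surely for every i. For n ≥ 1 set τ_n = c n^{1/b}. Then for every λ > 0 and every n ≥ 1, P( | (1/n) Σ_{i=1}^n ψ_{τ_n}(D_i) | ≥ λ n^{(1−b)/b} ) ≤ ( √C · c^{(2−b)/2} + C · c^{1−b} )² / λ². -/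

import Mathlib

open MeasureTheory Real

noncomputable def truncFun (τ : ℝ) (x : ℝ) : ℝ := max (-τ) (min x τ)

lemma truncFun_measurable (τ : ℝ) : Measurable (truncFun τ) :=
  measurable_const.max (measurable_id.min measurable_const)

lemma truncFun_abs_le {τ : ℝ} (hτ : 0 ≤ τ) (x : ℝ) : |truncFun τ x| ≤ τ := by
  rw [abs_le]
  constructor
  · exact le_max_left _ _
  · exact max_le (by linarith) (min_le_right _ _)

lemma truncFun_abs_le_abs {τ : ℝ} (hτ : 0 ≤ τ) (x : ℝ) : |truncFun τ x| ≤ |x| := by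
  rcases le_total x 0 with hx | hx
  · have : truncFun τ x = max (-τ) x := by
      unfold truncFun; rw [min_eq_left (by linarith)]
    rw [this, abs_le]
    constructor
    · have : -|x| = x := by rw [abs_of_nonpos hx]; ring
      rw [this]; exact le_max_right _ _
    · exact max_le (by linarith [abs_nonneg x]) (by linarith [neg_abs_le x, abs_nonneg x])
  · have : truncFun τ x = min x τ := by
      unfold truncFun
      rw [max_eq_right]
      exact le_min (by linarith) (by linarith)
    rw [this, abs_le]
    constructor
    · have h1 : (0:ℝ) ≤ min x τ := le_min hx hτ
      linarith [abs_nonneg x]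
    · calc min x τ ≤ x := min_le_left _ _
        _ ≤ |x| := le_abs_self x

lemma truncFun_eq_of_abs_le {τ x : ℝ} (h : |x| ≤ τ) : truncFun τ x = x := by
  rw [abs_le] at h
  unfold truncFun
  rw [min_eq_left h.2, max_eq_right h.1]

lemma truncFun_sq_le {b τ : ℝ} (hb1 : 1 < b) (hb2 : b ≤ 2) (hτ : 0 < τ) (x : ℝ) :
    (truncFun τ x) ^ 2 ≤ |x| ^ b * τ ^ (2 - b) := by
  rcases le_total |x| τ with h | h
  · have h1 : |truncFun τ x| ≤ |x| := truncFun_abs_le_abs hτ.le x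
    calc (truncFun τ x) ^ 2 = |truncFun τ x| ^ 2 := (sq_abs _).symm
      _ ≤ |x| ^ 2 := by apply pow_le_pow_left₀ (abs_nonneg _) h1
      _ = |x| ^ (2:ℝ) := by rw [← Real.rpow_natCast |x| 2]; norm_num
      _ = |x| ^ (b + (2 - b)) := by norm_num
      _ = |x| ^ b * |x| ^ (2 - b) := Real.rpow_add' (abs_nonneg x) (by norm_num)
      _ ≤ |x| ^ b * τ ^ (2 - b) := by
          apply mul_le_mul_of_nonneg_left _ (Real.rpow_nonneg (abs_nonneg x) b)
          exact Real.rpow_le_rpow (abs_nonneg x) h (by linarith)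
  · have h1 : |truncFun τ x| ≤ τ := truncFun_abs_le hτ.le x
    calc (truncFun τ x) ^ 2 = |truncFun τ x| ^ 2 := (sq_abs _).symm
      _ ≤ τ ^ 2 := by apply pow_le_pow_left₀ (abs_nonneg _) h1
      _ = τ ^ (2:ℝ) := by rw [← Real.rpow_natCast τ 2]; norm_num
      _ = τ ^ (b + (2 - b)) := by norm_num
      _ = τ ^ b * τ ^ (2 - b) := Real.rpow_add' hτ.le (by norm_num)
      _ ≤ |x| ^ b * τ ^ (2 - b) := by
          apply mul_le_mul_of_nonneg_right _ (Real.rpow_nonneg hτ.le _)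
          exact Real.rpow_le_rpow hτ.le h (by linarith)

lemma truncFun_sub_le {b τ : ℝ} (hb1 : 1 < b) (hτ : 0 < τ) (x : ℝ) :
    |truncFun τ x - x| ≤ |x| ^ b * τ ^ (1 - b) := by
  rcases le_total |x| τ with h | h
  · rw [truncFun_eq_of_abs_le h]
    simp only [sub_self, abs_zero]
    exact mul_nonneg (Real.rpow_nonneg (abs_nonneg x) b) (Real.rpow_nonneg hτ.le _)
  · have hx : 0 < |x| := lt_of_lt_of_le hτ h
    have key : |truncFun τ x - x| ≤ |x| := by
      rcases le_total x 0 with hx0 | hx0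
      · rw [abs_of_nonpos hx0] at h ⊢
        have ht : truncFun τ x = -τ := by
          unfold truncFun
          rw [min_eq_left (by linarith), max_eq_left (by linarith)]
        rw [ht, abs_of_nonneg (by linarith)]
        linarith
      · rw [abs_of_nonneg hx0] at h ⊢
        have ht : truncFun τ x = τ := by
          unfold truncFun
          rw [min_eq_right (by linarith), max_eq_right (by linarith)]
        rw [ht, abs_of_nonpos (by linarith)]
        linarith
    calc |truncFun τ x - x| ≤ |x| := key
      _ = |x| ^ (b + (1 - b)) := by norm_num
      _ = |x| ^ b * |x| ^ (1 - b) := Real.rpow_add' (abs_nonneg x) (by norm_num)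
      _ ≤ |x| ^ b * τ ^ (1 - b) := by
          apply mul_le_mul_of_nonneg_left _ (Real.rpow_nonneg (abs_nonneg x) b)
          exact Real.rpow_le_rpow_of_nonpos hτ h (by linarith)

lemma abs_condexp_le_condexp_abs {Ω : Type*} {mΩ : MeasurableSpace Ω}
    {m : MeasurableSpace Ω} (μ : @Measure Ω mΩ) [IsFiniteMeasure μ]
    {f : Ω → ℝ} (hf : Integrable f μ) :
    ∀ᵐ ω ∂μ, |(μ[f|m]) ω| ≤ (μ[(fun ω => |f ω|)|m]) ω := by
  have h1 : μ[f|m] ≤ᵐ[μ] μ[(fun ω => |f ω|)|m] :=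
    condExp_mono hf hf.abs (ae_of_all _ fun ω => le_abs_self _)
  have h2 : μ[-f|m] ≤ᵐ[μ] μ[(fun ω => |f ω|)|m] :=
    condExp_mono hf.neg hf.abs (ae_of_all _ fun ω => neg_le_abs _)
  have h3 := condExp_neg (μ := μ) (m := m) f
  filter_upwards [h1, h2, h3] with ω h1 h2 h3
  rw [abs_le]
  refine ⟨?_, h1⟩
  rw [h3] at h2
  simp only [Pi.neg_apply] at h2
  linarith

lemma sq_integral_abs_le {Ω : Type*} {mΩ : MeasurableSpace Ω}
    (μ : Measure Ω) [IsProbabilityMeasure μ] {f : Ω → ℝ}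
    (hf : Integrable f μ) (hf2 : Integrable (fun ω => f ω ^ 2) μ) :
    (∫ ω, |f ω| ∂μ) ^ 2 ≤ ∫ ω, f ω ^ 2 ∂μ := by
  set m := ∫ ω, |f ω| ∂μ with hm
  have key : (0:ℝ) ≤ ∫ ω, (|f ω| - m) ^ 2 ∂μ := integral_nonneg fun ω => sq_nonneg _
  have heq : ∀ ω, (|f ω| - m) ^ 2 = f ω ^ 2 - (2 * m) * |f ω| + m ^ 2 := by
    intro ω
    have := sq_abs (f ω)
    nlinarith [sq_abs (f ω)]
  have hint1 : Integrable (fun ω => f ω ^ 2 - (2 * m) * |f ω|) μ :=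
    hf2.sub (hf.abs.const_mul _)
  have h2 : ∫ ω, (|f ω| - m) ^ 2 ∂μ
      = ∫ ω, f ω ^ 2 ∂μ - 2 * m * m + m ^ 2 := by
    rw [integral_congr_ae (ae_of_all _ heq), integral_add hint1 (integrable_const _),
      integral_sub hf2 (hf.abs.const_mul _), integral_const_mul, integral_const]
    simp [← hm]
  rw [h2] at key
  nlinarith

/-- Probabilistic form of the optimal convergence rate `n^{(1−b)/b}` for averages of
adaptively truncated heavy-tailed martingale differences: `D i` stands for `D_{i+1}`
(F_{i+1}-measurable) and `ℱ i` for `F_i`, and `τ_n = c n^{1/b}`. -/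
theorem truncated_average_deviation_bound
    {Ω : Type*} {mΩ : MeasurableSpace Ω} (μ : Measure Ω) [IsProbabilityMeasure μ]
    (ℱ : Filtration ℕ mΩ)
    (b c C : ℝ) (hb : b ∈ Set.Ioc (1 : ℝ) 2) (hc : 0 < c) (hC : 0 ≤ C)
    (D : ℕ → Ω → ℝ)
    (hmeas : ∀ i, Measurable[ℱ (i + 1)] (D i))
    (hint : ∀ i, Integrable (D i) μ)
    (hintb : ∀ i, Integrable (fun ω => |D i ω| ^ b) μ)
    (hzero : ∀ i, μ[D i | ℱ i] =ᵐ[μ] 0)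
    (hcond : ∀ i, ∀ᵐ ω ∂μ, (μ[fun ω' => |D i ω'| ^ b | ℱ i]) ω ≤ C) :
    ∀ lam : ℝ, 0 < lam → ∀ n : ℕ, 1 ≤ n →
      (μ {ω | lam * (n : ℝ) ^ ((1 - b) / b)
          ≤ |(1 / (n : ℝ)) * ∑ i ∈ Finset.range n,
              truncFun (c * (n : ℝ) ^ (1 / b)) (D i ω)|}).toReal
        ≤ (Real.sqrt C * c ^ ((2 - b) / 2) + C * c ^ (1 - b)) ^ 2 / lam ^ 2 := by
  obtain ⟨hb1, hb2⟩ := hb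
  have hb0 : (0:ℝ) < b := by linarith
  intro lam hlam n hn
  have hn0 : (0:ℝ) < (n:ℝ) := by exact_mod_cast Nat.lt_of_lt_of_le Nat.zero_lt_one hn
  set τ : ℝ := c * (n:ℝ) ^ (1/b) with hτdef
  have hτ : 0 < τ := mul_pos hc (Real.rpow_pos_of_pos hn0 _)
  set r : ℝ := (n:ℝ) ^ ((1-b)/b) with hrdef
  have hr : 0 < r := Real.rpow_pos_of_pos hn0 _
  have hτ1b : (0:ℝ) ≤ τ ^ (1-b) := Real.rpow_nonneg hτ.le _
  have hτ2b : (0:ℝ) ≤ τ ^ (2-b) := Real.rpow_nonneg hτ.le _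
  -- truncated variables
  set Y : ℕ → Ω → ℝ := fun i ω => truncFun τ (D i ω) with hYdef
  have hDmeas : ∀ i, Measurable (D i) := fun i => (hmeas i).mono (ℱ.le (i+1)) le_rfl
  have hYmeas : ∀ i, Measurable (Y i) := fun i => (truncFun_measurable τ).comp (hDmeas i)
  have hYbound : ∀ i ω, |Y i ω| ≤ τ := fun i ω => truncFun_abs_le hτ.le _
  have hYint : ∀ i, Integrable (Y i) μ := fun i =>
    Integrable.mono' (integrable_const τ) (hYmeas i).aestronglyMeasurable
      (ae_of_all _ fun ω => by rw [Real.norm_eq_abs]; exact hYbound i ω)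
  -- conditional means
  set M : ℕ → Ω → ℝ := fun i => μ[Y i | ℱ i] with hMdef
  have hMint : ∀ i, Integrable (M i) μ := fun i => integrable_condExp
  have hMsm : ∀ i, StronglyMeasurable[ℱ i] (M i) := fun i => stronglyMeasurable_condExp
  have hMasm : ∀ i, AEStronglyMeasurable (M i) μ := fun i =>
    ((hMsm i).mono (ℱ.le i)).aestronglyMeasurable
  -- bias bound
  have hMbound : ∀ i, ∀ᵐ ω ∂μ, |M i ω| ≤ C * τ ^ (1-b) := by
    intro i
    have hgint : Integrable (fun ω => Y i ω - D i ω) μ := (hYint i).sub (hint i)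
    have e1 : M i =ᵐ[μ] μ[(fun ω => Y i ω - D i ω)|ℱ i] := by
      have h := condExp_sub (μ := μ) (m := ℱ i) (hYint i) (hint i)
      filter_upwards [h, hzero i] with ω hω h0
      have : ((fun ω => Y i ω - D i ω) : Ω → ℝ) = Y i - D i := rfl
      rw [this, hω]
      simp only [Pi.sub_apply, Pi.zero_apply] at h0 ⊢
      rw [h0, sub_zero]
    have e2 := abs_condexp_le_condexp_abs (m := ℱ i) μ hgint
    have e3 : μ[(fun ω => |Y i ω - D i ω|)|ℱ i]
        ≤ᵐ[μ] μ[(fun ω => τ ^ (1-b) * |D i ω| ^ b)|ℱ i] := by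
      refine condExp_mono hgint.abs ((hintb i).const_mul _) (ae_of_all _ fun ω => ?_)
      have := truncFun_sub_le hb1 hτ (D i ω)
      calc |Y i ω - D i ω| ≤ |D i ω| ^ b * τ ^ (1-b) := this
        _ = τ ^ (1-b) * |D i ω| ^ b := mul_comm _ _
    have e4 : μ[(fun ω => τ ^ (1-b) * |D i ω| ^ b)|ℱ i]
        =ᵐ[μ] fun ω => τ ^ (1-b) * (μ[(fun ω' => |D i ω'| ^ b)|ℱ i]) ω := by
      have h := condExp_smul (μ := μ) (m := ℱ i) (τ ^ (1-b)) (fun ω => |D i ω| ^ b)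
      filter_upwards [h] with ω hω
      have : ((τ ^ (1-b)) • (fun ω => |D i ω| ^ b)) = fun ω => τ ^ (1-b) * |D i ω| ^ b := by
        funext x; simp [smul_eq_mul]
      rw [← this, hω]
      simp [smul_eq_mul]
    filter_upwards [e1, e2, e3, e4, hcond i] with ω h1 h2 h3 h4 h5
    calc |M i ω| = |(μ[(fun ω => Y i ω - D i ω)|ℱ i]) ω| := by rw [h1]
      _ ≤ (μ[(fun ω => |Y i ω - D i ω|)|ℱ i]) ω := h2
      _ ≤ (μ[(fun ω => τ ^ (1-b) * |D i ω| ^ b)|ℱ i]) ω := h3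
      _ = τ ^ (1-b) * (μ[(fun ω' => |D i ω'| ^ b)|ℱ i]) ω := h4
      _ ≤ τ ^ (1-b) * C := mul_le_mul_of_nonneg_left h5 hτ1b
      _ = C * τ ^ (1-b) := mul_comm _ _
  -- centered variables
  set X : ℕ → Ω → ℝ := fun i ω => Y i ω - M i ω with hXdef
  have hXint : ∀ i, Integrable (X i) μ := fun i => (hYint i).sub (hMint i)
  have hXasm : ∀ i, AEStronglyMeasurable (X i) μ := fun i =>
    (hYmeas i).aestronglyMeasurable.sub (hMasm i)
  have hXbound : ∀ i, ∀ᵐ ω ∂μ, ‖X i ω‖ ≤ τ + C * τ ^ (1-b) := by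
    intro i
    filter_upwards [hMbound i] with ω hω
    rw [Real.norm_eq_abs]
    calc |X i ω| = |Y i ω - M i ω| := rfl
      _ ≤ |Y i ω| + |M i ω| := abs_sub _ _
      _ ≤ τ + C * τ ^ (1-b) := add_le_add (hYbound i ω) hω
  have hXsmF : ∀ i j : ℕ, i < j → StronglyMeasurable[ℱ j] (X i) := by
    intro i j hij
    have hY : StronglyMeasurable[ℱ j] (Y i) := by
      have : Measurable[ℱ (i+1)] (Y i) := (truncFun_measurable τ).comp (hmeas i)
      exact (this.mono (ℱ.mono (Nat.succ_le_of_lt hij)) le_rfl).stronglyMeasurable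
    exact hY.sub ((hMsm i).mono (ℱ.mono hij.le))
  have hXcond : ∀ i, μ[X i|ℱ i] =ᵐ[μ] 0 := by
    intro i
    have h := condExp_sub (μ := μ) (m := ℱ i) (hYint i) (hMint i)
    have h2 : μ[M i|ℱ i] = M i :=
      condExp_of_stronglyMeasurable (ℱ.le i) (hMsm i) (hMint i)
    have : ((fun ω => Y i ω - M i ω) : Ω → ℝ) = Y i - M i := rfl
    calc μ[X i|ℱ i] = μ[Y i - M i|ℱ i] := rfl
      _ =ᵐ[μ] μ[Y i|ℱ i] - μ[M i|ℱ i] := h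
      _ = M i - M i := by rw [h2, hMdef]
      _ = 0 := sub_self _
  -- products are integrable
  have hprodint : ∀ i j : ℕ, Integrable (fun ω => X i ω * X j ω) μ := fun i j =>
    (hXint j).bdd_mul (hXasm i) (hXbound i)
  -- orthogonality
  have horth : ∀ i j : ℕ, i < j → ∫ ω, X i ω * X j ω ∂μ = 0 := by
    intro i j hij
    rw [← integral_condExp (ℱ.le j) (f := fun ω => X i ω * X j ω)]
    have e := condExp_stronglyMeasurable_mul_of_bound (ℱ.le j) (hXsmF i j hij)
      (hXint j) _ (hXbound i)
    have e2 : μ[(fun ω => X i ω * X j ω)|ℱ j] =ᵐ[μ] fun ω => X i ω * 0 := by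
      have : ((fun ω => X i ω * X j ω) : Ω → ℝ) = X i * X j := rfl
      rw [this]
      filter_upwards [e, hXcond j] with ω hω h0
      rw [hω]
      simp only [Pi.mul_apply, Pi.zero_apply] at h0 ⊢
      rw [h0]
    rw [integral_congr_ae e2]
    simp
  -- second moment bound
  have hY2int : ∀ i, Integrable (fun ω => Y i ω ^ 2) μ := by
    intro i
    simp_rw [sq]
    exact (hYint i).bdd_mul (hYmeas i).aestronglyMeasurable
      (ae_of_all _ fun ω => by rw [Real.norm_eq_abs]; exact hYbound i ω)
  have hMYint : ∀ i, Integrable (fun ω => M i ω * Y i ω) μ := fun i =>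
    (hYint i).bdd_mul (hMasm i)
      (by filter_upwards [hMbound i] with ω hω; rw [Real.norm_eq_abs]; exact hω)
  have hM2int : ∀ i, Integrable (fun ω => M i ω ^ 2) μ := by
    intro i
    simp_rw [sq]
    exact (hMint i).bdd_mul (hMasm i)
      (by filter_upwards [hMbound i] with ω hω; rw [Real.norm_eq_abs]; exact hω)
  have hX2int : ∀ i, Integrable (fun ω => X i ω ^ 2) μ := by
    intro i
    simp_rw [sq]
    exact hprodint i i
  have hMY : ∀ i, ∫ ω, M i ω * Y i ω ∂μ = ∫ ω, M i ω ^ 2 ∂μ := by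
    intro i
    rw [← integral_condExp (ℱ.le i) (f := fun ω => M i ω * Y i ω)]
    have e := condExp_stronglyMeasurable_mul_of_bound (ℱ.le i) (hMsm i)
      (hYint i) (C * τ ^ (1-b))
      (by filter_upwards [hMbound i] with ω hω; rw [Real.norm_eq_abs]; exact hω)
    have e2 : μ[(fun ω => M i ω * Y i ω)|ℱ i] =ᵐ[μ] fun ω => M i ω ^ 2 := by
      have : ((fun ω => M i ω * Y i ω) : Ω → ℝ) = M i * Y i := rfl
      rw [this]
      filter_upwards [e] with ω hω
      rw [hω]
      simp only [Pi.mul_apply, sq, hMdef]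
    exact integral_congr_ae e2
  have hDb : ∀ i, ∫ ω, |D i ω| ^ b ∂μ ≤ C := by
    intro i
    rw [← integral_condExp (ℱ.le i) (f := fun ω => |D i ω| ^ b)]
    calc ∫ ω, (μ[(fun ω' => |D i ω'| ^ b)|ℱ i]) ω ∂μ ≤ ∫ _, C ∂μ :=
        integral_mono_ae integrable_condExp (integrable_const _) (hcond i)
      _ = C := by simp
  have hY2 : ∀ i, ∫ ω, Y i ω ^ 2 ∂μ ≤ C * τ ^ (2-b) := by
    intro i
    calc ∫ ω, Y i ω ^ 2 ∂μ ≤ ∫ ω, |D i ω| ^ b * τ ^ (2-b) ∂μ :=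
        integral_mono (hY2int i) ((hintb i).mul_const _)
          (fun ω => truncFun_sq_le hb1 hb2 hτ (D i ω))
      _ = (∫ ω, |D i ω| ^ b ∂μ) * τ ^ (2-b) := integral_mul_const _ _
      _ ≤ C * τ ^ (2-b) := mul_le_mul_of_nonneg_right (hDb i) hτ2b
  have hX2 : ∀ i, ∫ ω, X i ω ^ 2 ∂μ ≤ C * τ ^ (2-b) := by
    intro i
    have expand : ∀ ω, X i ω ^ 2 = Y i ω ^ 2 - 2 * (M i ω * Y i ω) + M i ω ^ 2 := by
      intro ω; simp only [hXdef]; ring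
    have hint2 : Integrable (fun ω => Y i ω ^ 2 - 2 * (M i ω * Y i ω)) μ :=
      (hY2int i).sub ((hMYint i).const_mul 2)
    have : ∫ ω, X i ω ^ 2 ∂μ
        = ∫ ω, Y i ω ^ 2 ∂μ - 2 * ∫ ω, M i ω * Y i ω ∂μ + ∫ ω, M i ω ^ 2 ∂μ := by
      rw [integral_congr_ae (ae_of_all _ expand), integral_add hint2 (hM2int i),
        integral_sub (hY2int i) ((hMYint i).const_mul 2), integral_const_mul]
    rw [this, hMY i]
    have hM2nonneg : (0:ℝ) ≤ ∫ ω, M i ω ^ 2 ∂μ := integral_nonneg fun ω => sq_nonneg _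
    have := hY2 i
    linarith
  -- sums
  set T : Ω → ℝ := fun ω => ∑ i ∈ Finset.range n, X i ω with hTdef
  set MS : Ω → ℝ := fun ω => ∑ i ∈ Finset.range n, M i ω with hMSdef
  set W : Ω → ℝ := fun ω => ∑ i ∈ Finset.range n, Y i ω with hWdef
  have hTint : Integrable T μ := integrable_finset_sum _ fun i _ => hXint i
  have hMSint : Integrable MS μ := integrable_finset_sum _ fun i _ => hMint i
  have hWint : Integrable W μ := integrable_finset_sum _ fun i _ => hYint i
  have hTasm : AEStronglyMeasurable T μ := hTint.1
  have hWTM : ∀ ω, W ω = T ω + MS ω := by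
    intro ω
    rw [hWdef, hTdef, hMSdef]
    simp only [← Finset.sum_add_distrib]
    refine Finset.sum_congr rfl fun i _ => ?_
    simp [hXdef]
  have hTbound : ∀ᵐ ω ∂μ, |T ω| ≤ (n:ℝ) * (τ + C * τ ^ (1-b)) := by
    filter_upwards [ae_all_iff.2 hXbound] with ω hω
    calc |T ω| ≤ ∑ i ∈ Finset.range n, |X i ω| := Finset.abs_sum_le_sum_abs _ _
      _ ≤ ∑ _i ∈ Finset.range n, (τ + C * τ ^ (1-b)) :=
          Finset.sum_le_sum fun i _ => by have := hω i; rwa [Real.norm_eq_abs] at this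
      _ = (n:ℝ) * (τ + C * τ ^ (1-b)) := by
          rw [Finset.sum_const, Finset.card_range, nsmul_eq_mul]
  have hMSbound : ∀ᵐ ω ∂μ, |MS ω| ≤ (n:ℝ) * (C * τ ^ (1-b)) := by
    filter_upwards [ae_all_iff.2 hMbound] with ω hω
    calc |MS ω| ≤ ∑ i ∈ Finset.range n, |M i ω| := Finset.abs_sum_le_sum_abs _ _
      _ ≤ ∑ _i ∈ Finset.range n, (C * τ ^ (1-b)) := Finset.sum_le_sum fun i _ => hω i
      _ = (n:ℝ) * (C * τ ^ (1-b)) := by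
          rw [Finset.sum_const, Finset.card_range, nsmul_eq_mul]
  have hWbound : ∀ ω, |W ω| ≤ (n:ℝ) * τ := by
    intro ω
    calc |W ω| ≤ ∑ i ∈ Finset.range n, |Y i ω| := Finset.abs_sum_le_sum_abs _ _
      _ ≤ ∑ _i ∈ Finset.range n, τ := Finset.sum_le_sum fun i _ => hYbound i ω
      _ = (n:ℝ) * τ := by rw [Finset.sum_const, Finset.card_range, nsmul_eq_mul]
  have hT2int : Integrable (fun ω => T ω ^ 2) μ := by
    simp_rw [sq]
    exact hTint.bdd_mul hTasm
      (by filter_upwards [hTbound] with ω hω; rwa [Real.norm_eq_abs])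
  have hW2int : Integrable (fun ω => W ω ^ 2) μ := by
    simp_rw [sq]
    exact hWint.bdd_mul hWint.1
      (ae_of_all _ fun ω => by rw [Real.norm_eq_abs]; exact hWbound ω)
  have hMS2int : Integrable (fun ω => MS ω ^ 2) μ := by
    simp_rw [sq]
    exact hMSint.bdd_mul hMSint.1
      (by filter_upwards [hMSbound] with ω hω; rwa [Real.norm_eq_abs])
  have hTMSint : Integrable (fun ω => T ω * MS ω) μ :=
    hMSint.bdd_mul hTasm
      (by filter_upwards [hTbound] with ω hω; rwa [Real.norm_eq_abs])
  -- second moment of the martingale sum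
  have hT2 : ∫ ω, T ω ^ 2 ∂μ ≤ (n:ℝ) * (C * τ ^ (2-b)) := by
    have expand : ∀ ω, T ω ^ 2
        = ∑ i ∈ Finset.range n, ∑ j ∈ Finset.range n, X i ω * X j ω := by
      intro ω
      rw [hTdef, sq]
      exact Finset.sum_mul_sum _ _ _ _
    calc ∫ ω, T ω ^ 2 ∂μ
        = ∫ ω, ∑ i ∈ Finset.range n, ∑ j ∈ Finset.range n, X i ω * X j ω ∂μ :=
          integral_congr_ae (ae_of_all _ expand)
      _ = ∑ i ∈ Finset.range n, ∫ ω, ∑ j ∈ Finset.range n, X i ω * X j ω ∂μ :=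
          integral_finset_sum _ fun i _ => integrable_finset_sum _ fun j _ => hprodint i j
      _ = ∑ i ∈ Finset.range n, ∑ j ∈ Finset.range n, ∫ ω, X i ω * X j ω ∂μ :=
          Finset.sum_congr rfl fun i _ => integral_finset_sum _ fun j _ => hprodint i j
      _ = ∑ i ∈ Finset.range n, ∫ ω, X i ω ^ 2 ∂μ := by
          refine Finset.sum_congr rfl fun i hi => ?_
          rw [Finset.sum_eq_single_of_mem i hi]
          · simp_rw [← sq]
          · intro j hj hji
            rcases lt_or_gt_of_ne hji with h | h
            · rw [show (fun ω => X i ω * X j ω) = fun ω => X j ω * X i ω from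
                funext fun ω => mul_comm _ _]
              exact horth j i h
            · exact horth i j h
      _ ≤ ∑ _i ∈ Finset.range n, C * τ ^ (2-b) := Finset.sum_le_sum fun i _ => hX2 i
      _ = (n:ℝ) * (C * τ ^ (2-b)) := by
          rw [Finset.sum_const, Finset.card_range, nsmul_eq_mul]
  -- L² bound on W
  set a : ℝ := Real.sqrt ((n:ℝ) * (C * τ ^ (2-b))) with hadef
  have ha0 : 0 ≤ a := Real.sqrt_nonneg _
  have ha2 : a ^ 2 = (n:ℝ) * (C * τ ^ (2-b)) := Real.sq_sqrt (by positivity)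
  set B' : ℝ := (n:ℝ) * (C * τ ^ (1-b)) with hB'def
  have hB'0 : 0 ≤ B' := by positivity
  have hTabs : ∫ ω, |T ω| ∂μ ≤ a := by
    have h := (sq_integral_abs_le μ hTint hT2int).trans hT2
    have h3 : (0:ℝ) ≤ ∫ ω, |T ω| ∂μ := integral_nonneg fun ω => abs_nonneg _
    nlinarith [ha2]
  have hTMS : ∫ ω, T ω * MS ω ∂μ ≤ a * B' := by
    calc ∫ ω, T ω * MS ω ∂μ ≤ ∫ ω, |T ω| * B' ∂μ := by
          refine integral_mono_ae hTMSint (hTint.abs.mul_const _) ?_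
          filter_upwards [hMSbound] with ω hω
          calc T ω * MS ω ≤ |T ω * MS ω| := le_abs_self _
            _ = |T ω| * |MS ω| := abs_mul _ _
            _ ≤ |T ω| * B' := mul_le_mul_of_nonneg_left hω (abs_nonneg _)
      _ = (∫ ω, |T ω| ∂μ) * B' := integral_mul_const _ _
      _ ≤ a * B' := mul_le_mul_of_nonneg_right hTabs hB'0
  have hMS2 : ∫ ω, MS ω ^ 2 ∂μ ≤ B' ^ 2 := by
    calc ∫ ω, MS ω ^ 2 ∂μ ≤ ∫ _ω, B' ^ 2 ∂μ := by
          refine integral_mono_ae hMS2int (integrable_const _) ?_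
          filter_upwards [hMSbound] with ω hω
          calc MS ω ^ 2 = |MS ω| ^ 2 := (sq_abs _).symm
            _ ≤ B' ^ 2 := pow_le_pow_left₀ (abs_nonneg _) hω 2
      _ = B' ^ 2 := by simp
  have hW2 : ∫ ω, W ω ^ 2 ∂μ ≤ (a + B') ^ 2 := by
    have expand : ∀ ω, W ω ^ 2 = T ω ^ 2 + 2 * (T ω * MS ω) + MS ω ^ 2 := fun ω => by
      rw [hWTM ω]; ring
    have i1 : Integrable (fun ω => 2 * (T ω * MS ω)) μ := hTMSint.const_mul 2
    have i2 : Integrable (fun ω => T ω ^ 2 + 2 * (T ω * MS ω)) μ := hT2int.add i1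
    rw [integral_congr_ae (ae_of_all _ expand), integral_add i2 hMS2int,
      integral_add hT2int i1, integral_const_mul]
    nlinarith [hT2, hTMS, hMS2, ha2]
  -- Markov / Chebyshev
  set ε : ℝ := (n:ℝ) * (lam * r) with hεdef
  have hε : 0 < ε := by positivity
  have hsub : {ω | lam * r ≤ |(1/(n:ℝ)) * ∑ i ∈ Finset.range n, truncFun τ (D i ω)|}
      ⊆ {ω | ε ^ 2 ≤ (fun ω => W ω ^ 2) ω} := by
    intro ω hω
    simp only [Set.mem_setOf_eq] at hω ⊢
    have hWeq : (∑ i ∈ Finset.range n, truncFun τ (D i ω)) = W ω := rfl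
    rw [hWeq] at hω
    have h1 : ε ≤ |W ω| := by
      have := mul_le_mul_of_nonneg_left hω hn0.le
      rw [abs_mul, abs_of_pos (by positivity : (0:ℝ) < 1/(n:ℝ))] at this
      calc ε = (n:ℝ) * (lam * r) := hεdef
        _ ≤ (n:ℝ) * (1/(n:ℝ) * |W ω|) := this
        _ = |W ω| := by field_simp
    calc ε ^ 2 ≤ |W ω| ^ 2 := pow_le_pow_left₀ hε.le h1 2
      _ = W ω ^ 2 := sq_abs _
  have markov := mul_meas_ge_le_integral_of_nonneg
    (ae_of_all _ fun ω => sq_nonneg (W ω)) hW2int (ε ^ 2)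
  have h1 : (μ {ω | lam * r
        ≤ |(1/(n:ℝ)) * ∑ i ∈ Finset.range n, truncFun τ (D i ω)|}).toReal
      ≤ (μ {ω | ε ^ 2 ≤ (fun ω => W ω ^ 2) ω}).toReal :=
    ENNReal.toReal_mono (measure_ne_top μ _) (measure_mono hsub)
  have h2 : (μ {ω | ε ^ 2 ≤ (fun ω => W ω ^ 2) ω}).toReal
      ≤ (∫ ω, W ω ^ 2 ∂μ) / ε ^ 2 := by
    rw [le_div_iff₀ (by positivity)]
    calc (μ {ω | ε ^ 2 ≤ (fun ω => W ω ^ 2) ω}).toReal * ε ^ 2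
        = ε ^ 2 * (μ {ω | ε ^ 2 ≤ (fun ω => W ω ^ 2) ω}).toReal := mul_comm _ _
      _ ≤ ∫ ω, W ω ^ 2 ∂μ := markov
  have h3 : (∫ ω, W ω ^ 2 ∂μ) / ε ^ 2 ≤ (a + B') ^ 2 / ε ^ 2 :=
    div_le_div_of_nonneg_right hW2 (by positivity)
  -- arithmetic identification of the constants
  have hτpow : ∀ e : ℝ, τ ^ e = c ^ e * (n:ℝ) ^ (e/b) := by
    intro e
    rw [hτdef, Real.mul_rpow hc.le (Real.rpow_nonneg hn0.le _), ← Real.rpow_mul hn0.le]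
    congr 1
    field_simp
  have hn1 : (n:ℝ) * (n:ℝ) ^ ((1-b)/b) = (n:ℝ) ^ ((1:ℝ)/b) := by
    nth_rewrite 1 [← Real.rpow_one (n:ℝ)]
    rw [← Real.rpow_add hn0]
    congr 1
    field_simp; ring
  have hsqc : Real.sqrt (c ^ ((2:ℝ)-b)) = c ^ ((2-b)/2) := by
    rw [Real.sqrt_eq_rpow, ← Real.rpow_mul hc.le]
    congr 1
    ring
  have ha' : a = Real.sqrt C * c ^ ((2-b)/2) * (n:ℝ) ^ ((1:ℝ)/b) := by
    rw [hadef, hτpow]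
    have e2 : ((n:ℝ) ^ ((1:ℝ)/b)) ^ 2 = (n:ℝ) * (n:ℝ) ^ ((2-b)/b) := by
      rw [← Real.rpow_natCast ((n:ℝ) ^ ((1:ℝ)/b)) 2, ← Real.rpow_mul hn0.le,
        show ((1:ℝ)/b * (2:ℕ)) = 1 + (2-b)/b by push_cast; field_simp; ring,
        Real.rpow_add hn0, Real.rpow_one]
    have e1 : (n:ℝ) * (C * (c ^ ((2:ℝ)-b) * (n:ℝ) ^ ((2-b)/b)))
        = C * c ^ ((2:ℝ)-b) * ((n:ℝ) ^ ((1:ℝ)/b)) ^ 2 := by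
      rw [e2]; ring
    rw [e1, Real.sqrt_mul (by positivity) _, Real.sqrt_sq (by positivity),
      Real.sqrt_mul hC, hsqc]
  have hB'' : B' = C * c ^ (1-b) * (n:ℝ) ^ ((1:ℝ)/b) := by
    rw [hB'def, hτpow]
    calc (n:ℝ) * (C * (c ^ ((1:ℝ)-b) * (n:ℝ) ^ ((1-b)/b)))
        = C * c ^ ((1:ℝ)-b) * ((n:ℝ) * (n:ℝ) ^ ((1-b)/b)) := by ring
      _ = C * c ^ (1-b) * (n:ℝ) ^ ((1:ℝ)/b) := by rw [hn1]
  have hε' : ε = lam * (n:ℝ) ^ ((1:ℝ)/b) := by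
    rw [hεdef, hrdef]
    calc (n:ℝ) * (lam * (n:ℝ) ^ ((1-b)/b))
        = lam * ((n:ℝ) * (n:ℝ) ^ ((1-b)/b)) := by ring
      _ = lam * (n:ℝ) ^ ((1:ℝ)/b) := by rw [hn1]
  have hs0 : ((n:ℝ) ^ ((1:ℝ)/b)) ≠ 0 := ne_of_gt (Real.rpow_pos_of_pos hn0 _)
  have key : (a + B') ^ 2 / ε ^ 2
      = (Real.sqrt C * c ^ ((2-b)/2) + C * c ^ (1-b)) ^ 2 / lam ^ 2 := by
    rw [ha', hB'', hε',
      show Real.sqrt C * c ^ ((2-b)/2) * (n:ℝ) ^ ((1:ℝ)/b)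
          + C * c ^ (1-b) * (n:ℝ) ^ ((1:ℝ)/b)
        = (Real.sqrt C * c ^ ((2-b)/2) + C * c ^ (1-b)) * (n:ℝ) ^ ((1:ℝ)/b) from by ring,
      mul_pow, mul_pow]
    rw [mul_div_mul_right _ _ (pow_ne_zero 2 hs0)]
  exact le_trans (le_trans (le_trans h1 h2) h3) (le_of_eq key)
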